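/- Let (g₁, g₂, ▷, ◁) be a matched pair of Lie algebras over a field k, g = g₁ ⋈ g₂ the double cross sum, and d = g ⊕ g* the Lie algebra with bracket [(X,α),(Y,β)] = ([X,Y], ad*_X β − ad*_Y α), where (ad*_X α)(Z) = −α([X,Z]). Let g₁* ⊆ g* denote the annihilator of g₂ (functionals vanishing on {0} ⊕ g₂) and g₂* ⊆ g* the annihilator of g₁. Then b₁ := ({0} ⊕ g₂) ⊕ g₁* and b₂ := (g₁ ⊕ {0}) ⊕ g₂* are Lie subalgebras of d, in b₁ the subspace g₁* is an abelian ideal, in b₂ the subspace g₂* is an abelian ideal, and d = b₁ ⊕ b₂ as vector spaces. -/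

import Mathlib

section

variable {k : Type*} [Field k]
variable {g₁ : Type*} [LieRing g₁] [LieAlgebra k g₁]
variable {g₂ : Type*} [LieRing g₂] [LieAlgebra k g₂]

/-- The bracket of the double cross sum `g = g₁ ⋈ g₂` of a matched pair. -/
def dcsBracket (act : g₂ →ₗ[k] g₁ →ₗ[k] g₁) (back : g₂ →ₗ[k] g₁ →ₗ[k] g₂) :
    g₁ × g₂ → g₁ × g₂ → g₁ × g₂ :=
  fun p q =>
    (⁅p.1, q.1⁆ + act p.2 q.1 - act q.2 p.1,
     ⁅p.2, q.2⁆ + back p.2 q.1 - back q.2 p.1)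

lemma dcsBracket_add_right (act : g₂ →ₗ[k] g₁ →ₗ[k] g₁)
    (back : g₂ →ₗ[k] g₁ →ₗ[k] g₂) (X Z Z' : g₁ × g₂) :
    dcsBracket act back X (Z + Z') =
      dcsBracket act back X Z + dcsBracket act back X Z' := by
  simp only [dcsBracket, Prod.fst_add, Prod.snd_add, lie_add, map_add,
    LinearMap.add_apply, Prod.mk_add_mk, Prod.mk.injEq]
  constructor <;> abel

lemma dcsBracket_smul_right (act : g₂ →ₗ[k] g₁ →ₗ[k] g₁)
    (back : g₂ →ₗ[k] g₁ →ₗ[k] g₂) (c : k) (X Z : g₁ × g₂) :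
    dcsBracket act back X (c • Z) = c • dcsBracket act back X Z := by
  simp only [dcsBracket, Prod.smul_fst, Prod.smul_snd, lie_smul, map_smul,
    LinearMap.smul_apply, Prod.smul_mk, smul_add, smul_sub]

/-- The coadjoint action `(ad*_X α)(Z) = −α([X,Z])` of `g = g₁ ⋈ g₂` on its
dual space. -/
def dcsCoad (act : g₂ →ₗ[k] g₁ →ₗ[k] g₁) (back : g₂ →ₗ[k] g₁ →ₗ[k] g₂)
    (X : g₁ × g₂) (α : Module.Dual k (g₁ × g₂)) : Module.Dual k (g₁ × g₂) where
  toFun Z := -α (dcsBracket act back X Z)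
  map_add' Z Z' := by
    try dsimp only
    rw [dcsBracket_add_right, map_add]; abel
  map_smul' c Z := by
    try dsimp only
    rw [dcsBracket_smul_right, map_smul]; simp

/-- The bracket `[(X,α),(Y,β)] = ([X,Y], ad*_X β − ad*_Y α)` on
`d = (g₁ ⋈ g₂) ⋉ g*`. -/
def dBracket (act : g₂ →ₗ[k] g₁ →ₗ[k] g₁) (back : g₂ →ₗ[k] g₁ →ₗ[k] g₂) :
    (g₁ × g₂) × Module.Dual k (g₁ × g₂) →
    (g₁ × g₂) × Module.Dual k (g₁ × g₂) →
    (g₁ × g₂) × Module.Dual k (g₁ × g₂) :=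
  fun P Q =>
    (dcsBracket act back P.1 Q.1,
     dcsCoad act back P.1 Q.2 - dcsCoad act back Q.1 P.2)

/-- `b₁ = ({0} ⊕ g₂) ⊕ g₁*`, where `g₁* ⊆ g*` is the annihilator of `g₂`. -/
def bOne (k : Type*) [Field k] (g₁ g₂ : Type*)
    [LieRing g₁] [LieAlgebra k g₁] [LieRing g₂] [LieAlgebra k g₂] :
    Set ((g₁ × g₂) × Module.Dual k (g₁ × g₂)) :=
  {P | P.1.1 = 0 ∧ ∀ f : g₂, P.2 (0, f) = 0}

/-- `b₂ = (g₁ ⊕ {0}) ⊕ g₂*`, where `g₂* ⊆ g*` is the annihilator of `g₁`. -/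
def bTwo (k : Type*) [Field k] (g₁ g₂ : Type*)
    [LieRing g₁] [LieAlgebra k g₁] [LieRing g₂] [LieAlgebra k g₂] :
    Set ((g₁ × g₂) × Module.Dual k (g₁ × g₂)) :=
  {P | P.1.2 = 0 ∧ ∀ x : g₁, P.2 (x, 0) = 0}

/-- Semidualization of the classical double `d = (g₁ ⋈ g₂) ⋉ g*` of a matched
pair: `b₁ = ({0} ⊕ g₂) ⊕ g₁*` and `b₂ = (g₁ ⊕ {0}) ⊕ g₂*` are Lie subalgebras
of `d`; in `b₁` the subspace `g₁*` is an abelian ideal, in `b₂` the subspace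
`g₂*` is an abelian ideal, and `d = b₁ ⊕ b₂` as vector spaces. -/
lemma dcsCoad_apply (act : g₂ →ₗ[k] g₁ →ₗ[k] g₁) (back : g₂ →ₗ[k] g₁ →ₗ[k] g₂)
    (X : g₁ × g₂) (α : Module.Dual k (g₁ × g₂)) (Z : g₁ × g₂) :
    dcsCoad act back X α Z = -α (dcsBracket act back X Z) := rfl

theorem semidualization_skeletal_slicing
    (act : g₂ →ₗ[k] g₁ →ₗ[k] g₁) (back : g₂ →ₗ[k] g₁ →ₗ[k] g₂)
    (mp₁ : ∀ (f f' : g₂) (x : g₁),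
      act ⁅f, f'⁆ x = act f (act f' x) - act f' (act f x))
    (mp₂ : ∀ (f : g₂) (x x' : g₁),
      back f ⁅x, x'⁆ = back (back f x) x' - back (back f x') x)
    (mp₃ : ∀ (f : g₂) (x x' : g₁),
      act f ⁅x, x'⁆ = ⁅act f x, x'⁆ + ⁅x, act f x'⁆
        + act (back f x) x' - act (back f x') x)
    (mp₄ : ∀ (f f' : g₂) (x : g₁),
      back ⁅f, f'⁆ x = ⁅back f x, f'⁆ + ⁅f, back f' x⁆
        + back f (act f' x) - back f' (act f x)) :
    -- `b₁` is a Lie subalgebra of `d`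
    (∀ P Q, P ∈ bOne k g₁ g₂ → Q ∈ bOne k g₁ g₂ →
      dBracket act back P Q ∈ bOne k g₁ g₂) ∧
    -- `b₂` is a Lie subalgebra of `d`
    (∀ P Q, P ∈ bTwo k g₁ g₂ → Q ∈ bTwo k g₁ g₂ →
      dBracket act back P Q ∈ bTwo k g₁ g₂) ∧
    -- in `b₁`, the subspace `g₁*` is an abelian ideal
    (∀ α β : Module.Dual k (g₁ × g₂),
      (∀ f : g₂, α (0, f) = 0) → (∀ f : g₂, β (0, f) = 0) →
      dBracket act back ((0 : g₁ × g₂), α) ((0 : g₁ × g₂), β) = 0) ∧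
    (∀ P (α : Module.Dual k (g₁ × g₂)), P ∈ bOne k g₁ g₂ →
      (∀ f : g₂, α (0, f) = 0) →
      (dBracket act back P ((0 : g₁ × g₂), α)).1 = 0 ∧
      ∀ f : g₂, (dBracket act back P ((0 : g₁ × g₂), α)).2 (0, f) = 0) ∧
    -- in `b₂`, the subspace `g₂*` is an abelian ideal
    (∀ α β : Module.Dual k (g₁ × g₂),
      (∀ x : g₁, α (x, 0) = 0) → (∀ x : g₁, β (x, 0) = 0) →
      dBracket act back ((0 : g₁ × g₂), α) ((0 : g₁ × g₂), β) = 0) ∧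
    (∀ P (α : Module.Dual k (g₁ × g₂)), P ∈ bTwo k g₁ g₂ →
      (∀ x : g₁, α (x, 0) = 0) →
      (dBracket act back P ((0 : g₁ × g₂), α)).1 = 0 ∧
      ∀ x : g₁, (dBracket act back P ((0 : g₁ × g₂), α)).2 (x, 0) = 0) ∧
    -- `d = b₁ ⊕ b₂` as vector spaces
    (∀ P : (g₁ × g₂) × Module.Dual k (g₁ × g₂),
      ∃ Q R, Q ∈ bOne k g₁ g₂ ∧ R ∈ bTwo k g₁ g₂ ∧ P = Q + R) ∧
    (∀ Q R, Q ∈ bOne k g₁ g₂ → R ∈ bTwo k g₁ g₂ → Q + R = 0 →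
      Q = 0 ∧ R = 0) := by
  have hz : ∀ Z : g₁ × g₂, dcsBracket act back 0 Z = 0 := by
    intro Z; simp [dcsBracket]
  have hz' : ∀ X : g₁ × g₂, dcsBracket act back X 0 = 0 := by
    intro X; simp [dcsBracket]
  refine ⟨?_, ?_, ?_, ?_, ?_, ?_, ?_, ?_⟩
  · rintro ⟨⟨x, p⟩, α⟩ ⟨⟨y, q⟩, β⟩ ⟨hx, hα⟩ ⟨hy, hβ⟩
    dsimp at hx hy; subst hx; subst hy
    refine ⟨by simp [dBracket, dcsBracket], ?_⟩
    intro f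
    simp only [dBracket, LinearMap.sub_apply, dcsCoad_apply, dcsBracket]
    simp [hα, hβ]
  · rintro ⟨⟨x, p⟩, α⟩ ⟨⟨y, q⟩, β⟩ ⟨hx, hα⟩ ⟨hy, hβ⟩
    dsimp at hx hy; subst hx; subst hy
    refine ⟨by simp [dBracket, dcsBracket], ?_⟩
    intro z
    simp only [dBracket, LinearMap.sub_apply, dcsCoad_apply, dcsBracket]
    simp [hα, hβ]
  · intro α β _ _
    ext <;> simp [dBracket, dcsCoad_apply, hz]
  · rintro ⟨⟨x, p⟩, β⟩ α ⟨hx, hβ⟩ hα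
    dsimp at hx; subst hx
    refine ⟨by simp [dBracket, hz'], ?_⟩
    intro f
    simp only [dBracket, LinearMap.sub_apply, dcsCoad_apply, dcsBracket]
    simp [hα, hβ]
  · intro α β _ _
    ext <;> simp [dBracket, dcsCoad_apply, hz]
  · rintro ⟨⟨x, p⟩, β⟩ α ⟨hx, hβ⟩ hα
    dsimp at hx; subst hx
    refine ⟨by simp [dBracket, hz'], ?_⟩
    intro z
    simp only [dBracket, LinearMap.sub_apply, dcsCoad_apply, dcsBracket]
    simp [hα, hβ]
  · rintro ⟨⟨x, p⟩, α⟩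
    refine ⟨((0, p), α.comp ((LinearMap.inl k g₁ g₂).comp (LinearMap.fst k g₁ g₂))),
      ((x, 0), α.comp ((LinearMap.inr k g₁ g₂).comp (LinearMap.snd k g₁ g₂))),
      ⟨rfl, fun f => by simp; exact map_zero α⟩, ⟨rfl, fun z => by simp; exact map_zero α⟩, ?_⟩
    refine Prod.ext (by simp) ?_
    apply LinearMap.ext
    rintro ⟨z, f⟩
    simp only [Prod.snd_add, LinearMap.add_apply, LinearMap.comp_apply,
      LinearMap.fst_apply, LinearMap.snd_apply, LinearMap.inl_apply,
      LinearMap.inr_apply]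
    have h : ((z, f) : g₁ × g₂) = (z, 0) + (0, f) := by simp
    rw [h, map_add]
  · rintro ⟨⟨x, p⟩, α⟩ ⟨⟨y, q⟩, β⟩ ⟨hx, hα⟩ ⟨hy, hβ⟩ h
    dsimp at hx hy; subst hx; subst hy
    have h1 : (0 : g₁) + y = 0 := congrArg (fun P => P.1.1) h
    have h2 : p + (0 : g₂) = 0 := congrArg (fun P => P.1.2) h
    have hy0 : y = 0 := by simpa using h1
    have hp0 : p = 0 := by simpa using h2
    have hab : α + β = 0 := congrArg Prod.snd h
    have hα0 : α = 0 := by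
      apply LinearMap.ext
      rintro ⟨z, f⟩
      have hzf : ((z, f) : g₁ × g₂) = (z, 0) + (0, f) := by simp
      rw [hzf, map_add, hα]
      have hb : α (z, 0) + β (z, 0) = 0 :=
        congrArg (fun γ : Module.Dual k (g₁ × g₂) => γ ((z, 0) : g₁ × g₂)) hab
      rw [hβ] at hb
      simpa using hb
    have hβ0 : β = 0 := by
      rw [hα0] at hab; simpa using hab
    subst hy0; subst hp0; subst hα0; subst hβ0
    exact ⟨rfl, rfl⟩

end
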